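/- Let n ≥ 1 and for each k with 1 ≤ k ≤ n define e_k = (−1)^{n−k}·k²·((n−1)!)²·√n·C(2n, n+k)/(2n)!. Then Σ_{k=1}^{n} 2|e_k| = 2·4^{n−1}/(√n·(n+1)·C_n), where C_n = (1/(n+1))·C(2n,n) is the n-th Catalan number, and the sign of e_k is positive if and only if k ≡ n (mod 2). -/

import Mathlib

open Finset in
private
lemma aux1 (s r : ℕ) : (s+1) * (s+r+1).choose r = (s+r+1) * ((s+r).choose r) := by
  have h1 := Nat.add_one_mul_choose_eq (s+r) s
  have h2 : (s+r+1).choose (s+1) = (s+r+1).choose r := by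
    rw [← Nat.choose_symm (show s+1 ≤ s+r+1 by omega)]
    congr 1; omega
  have h3 : (s+r).choose s = (s+r).choose r := by
    rw [← Nat.choose_symm (show s ≤ s+r by omega)]
    congr 1; omega
  rw [h2, h3] at h1
  linarith [h1]

lemma idI (m j : ℕ) : (2*m+2) * (2*m+1).choose (m+j+1) = (2*m+2).choose (m+j+2) * (m+j+2) := by
  have := Nat.add_one_mul_choose_eq (2*m+1) (m+j+1)
  simpa [Nat.succ_eq_add_one, show 2*m+1+1 = 2*m+2 by ring, show m+j+1+1 = m+j+2 by ring] using this

lemma idII (m j : ℕ) (hj : j ≤ m) :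
    (m-j) * (2*m+2).choose (m+j+2) = (2*m+2) * (2*m+1).choose (m+j+2) := by
  rcases Nat.lt_or_ge j m with h | h
  · obtain ⟨s, hs⟩ : ∃ s, m - j = s + 1 := ⟨m - j - 1, by omega⟩
    have h1 := aux1 s (m+j+2)
    rw [show s+(m+j+2)+1 = 2*m+2 by omega] at h1
    rw [show s+(m+j+2) = 2*m+1 by omega] at h1
    rw [hs]
    exact h1
  · have hjm : m = j := le_antisymm h hj
    subst hjm
    have h0 : (2*m+1).choose (m+m+2) = 0 := Nat.choose_eq_zero_of_lt (by omega)
    simp [h0, Nat.sub_self]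

lemma step (m j : ℕ) (hj : j ≤ m) :
    (j+1) * (2*m+2).choose (m+j+2) + (m+1) * (2*m+1).choose (m+j+2)
      = (m+1) * (2*m+1).choose (m+j+1) := by
  have h1 := idI m j
  have h2 := idII m j hj
  have key : 2*((j+1) * (2*m+2).choose (m+j+2) + (m+1) * (2*m+1).choose (m+j+2))
      = 2*((m+1) * (2*m+1).choose (m+j+1)) := by
    zify [hj] at h1 h2 ⊢
    linear_combination -h1 - h2
  omega

lemma sumA (m : ℕ) : ∑ k ∈ Finset.range (m+1), (2*m+1).choose (m+1+k) = 4^m := by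
  have hc : ∀ j ∈ Finset.range (m+1), (2*m+1).choose (m+1+(m+1-1-j)) = (2*m+1).choose j := by
    intro j hj
    rw [Finset.mem_range] at hj
    rw [show m+1+(m+1-1-j) = 2*m+1-j by omega, Nat.choose_symm (by omega)]
  rw [← Finset.sum_range_reflect, Finset.sum_congr rfl hc, Nat.sum_range_choose_halfway]

lemma keyZ (m : ℕ) :
    ∑ k ∈ Finset.range (m+1), ((k:ℤ)+1)^2 * (((2*m+2).choose (m+k+2) : ℕ) : ℤ)
      = ((m:ℤ)+1) * 4^m := by
  set F : ℕ → ℤ := fun i => (i:ℤ) * ((2*m+1).choose (m+1+i) : ℤ) with hF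
  have hterm : ∀ k ∈ Finset.range (m+1),
      ((k:ℤ)+1)^2 * ((2*m+2).choose (m+k+2) : ℤ)
        = ((m:ℤ)+1) * ((F k - F (k+1)) + ((2*m+1).choose (m+1+k) : ℤ)) := by
    intro k hk
    rw [Finset.mem_range] at hk
    have hs := step m k (by omega)
    have hs' := hs
    zify at hs'
    simp only [hF]
    rw [show m+1+(k+1) = m+k+2 by ring, show m+1+k = m+k+1 by ring]
    push_cast
    linear_combination ((k:ℤ)+1) * hs'
  rw [Finset.sum_congr rfl hterm, ← Finset.mul_sum, Finset.sum_add_distrib,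
    Finset.sum_range_sub' F (m+1)]
  have h0 : F (m+1) = 0 := by
    simp only [hF]
    have : (2*m+1).choose (m+1+(m+1)) = 0 := Nat.choose_eq_zero_of_lt (by omega)
    rw [this]; simp
  have hA : ∑ k ∈ Finset.range (m+1), ((2*m+1).choose (m+1+k) : ℤ) = 4^m := by
    exact_mod_cast sumA m
  rw [h0, hA]
  simp only [hF]
  push_cast
  ring

lemma keyN (n : ℕ) (hn : 1 ≤ n) :
    ∑ k ∈ Finset.Icc 1 n, k^2 * (2*n).choose (n+k) = n * 4^(n-1) := by
  obtain ⟨m, rfl⟩ : ∃ m, n = m + 1 := ⟨n - 1, by omega⟩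
  have hz := keyZ m
  have : ∑ k ∈ Finset.Icc 1 (m+1), k^2 * (2*(m+1)).choose ((m+1)+k)
      = ∑ k ∈ Finset.range (m+1), (k+1)^2 * (2*m+2).choose (m+k+2) := by
    rw [← Finset.Ico_add_one_right_eq_Icc, Finset.sum_Ico_eq_sum_range]
    apply Finset.sum_congr (by congr 1)
    intro k _
    rw [show 1+k = k+1 by ring, show (m+1)+(k+1) = m+k+2 by ring,
      show 2*(m+1) = 2*m+2 by ring]
  rw [this, show (m+1) * 4^((m+1)-1) = (m+1) * 4^m by norm_num]
  exact_mod_cast hz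


theorem stmt_18 (n : ℕ) (hn : 1 ≤ n) (e : ℕ → ℝ)
    (he : ∀ k : ℕ, 1 ≤ k → k ≤ n →
      e k = (-1) ^ (n - k) * (k : ℝ) ^ 2 * ((Nat.factorial (n - 1) : ℝ)) ^ 2 *
        Real.sqrt n * (Nat.choose (2 * n) (n + k) : ℝ) /
          (Nat.factorial (2 * n) : ℝ))
    (Cn : ℝ) (hCn : Cn = (Nat.choose (2 * n) n : ℝ) / (n + 1)) :
    (∑ k ∈ Finset.Icc 1 n, 2 * |e k| =
      2 * 4 ^ (n - 1) / (Real.sqrt n * (n + 1) * Cn)) ∧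
    (∀ k ∈ Finset.Icc 1 n, (0 < e k ↔ k % 2 = n % 2)) := by
  have hn0 : (0:ℝ) < n := by exact_mod_cast hn
  set S := Real.sqrt n with hSdef
  have hS0 : 0 < S := Real.sqrt_pos.mpr hn0
  have hSS : S * S = n := Real.mul_self_sqrt hn0.le
  have hT : (0:ℝ) < (Nat.factorial (2*n) : ℝ) := by exact_mod_cast Nat.factorial_pos _
  have hC : (0:ℝ) < ((2*n).choose n : ℝ) := by
    exact_mod_cast Nat.choose_pos (show n ≤ 2*n by omega)
  have hF : (0:ℝ) < (Nat.factorial (n-1) : ℝ) := by exact_mod_cast Nat.factorial_pos _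
  constructor
  · have habs : ∀ k ∈ Finset.Icc 1 n, 2*|e k| =
        (2 * ((Nat.factorial (n-1):ℝ))^2 * S / (Nat.factorial (2*n):ℝ)) *
          ((k:ℝ)^2 * ((2*n).choose (n+k) : ℝ)) := by
      intro k hk
      rw [Finset.mem_Icc] at hk
      rw [he k hk.1 hk.2]
      rw [abs_div, abs_mul, abs_mul, abs_mul, abs_mul, abs_pow, abs_neg, abs_one,
        one_pow, one_mul, abs_of_nonneg hS0.le]
      rw [abs_of_nonneg (by positivity : (0:ℝ) ≤ (k:ℝ)^2),
        abs_of_nonneg (by positivity : (0:ℝ) ≤ ((Nat.factorial (n-1):ℝ))^2),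
        abs_of_nonneg (by positivity : (0:ℝ) ≤ (((2*n).choose (n+k) : ℕ):ℝ)),
        abs_of_nonneg hT.le]
      ring
    rw [Finset.sum_congr rfl habs, ← Finset.mul_sum]
    have hkey : ∑ k ∈ Finset.Icc 1 n, (k:ℝ)^2 * ((2*n).choose (n+k) : ℝ)
        = (n:ℝ) * 4^(n-1) := by exact_mod_cast keyN n hn
    rw [hkey, hCn]
    have hfactN : (2*n).choose n * n.factorial * n.factorial = (2*n).factorial := by
      have h := Nat.choose_mul_factorial_mul_factorial (show n ≤ 2*n by omega)
      rwa [show 2*n-n = n by omega] at h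
    have hfact : ((2*n).choose n : ℝ) * (n.factorial : ℝ) * (n.factorial : ℝ)
        = ((2*n).factorial : ℝ) := by exact_mod_cast hfactN
    have hfac2 : (n.factorial : ℝ) = n * ((n-1).factorial : ℝ) := by
      obtain ⟨m, rfl⟩ : ∃ m, n = m + 1 := ⟨n - 1, by omega⟩
      simp only [Nat.add_sub_cancel, Nat.factorial_succ]
      push_cast
      ring
    have hn1 : ((n:ℝ)+1) ≠ 0 := by positivity
    rw [hfac2] at hfact
    field_simp
    linear_combination hfact
      + (((Nat.factorial (n-1):ℝ))^2*(n:ℝ)*(((2*n).choose n : ℕ):ℝ)) * hSS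
  · intro k hk
    rw [Finset.mem_Icc] at hk
    rw [he k hk.1 hk.2]
    have hk0 : (0:ℝ) < (k:ℝ) := by exact_mod_cast hk.1
    have hCh : (0:ℝ) < (((2*n).choose (n+k) : ℕ):ℝ) := by
      exact_mod_cast Nat.choose_pos (show n+k ≤ 2*n by omega)
    have hP : (0:ℝ) < (k:ℝ)^2 * ((Nat.factorial (n-1):ℝ))^2 * S *
        (((2*n).choose (n+k) : ℕ):ℝ) / ((Nat.factorial (2*n):ℝ)) := by positivity
    rcases Nat.even_or_odd (n-k) with hev | hod
    · rw [hev.neg_one_pow]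
      have hmod : k % 2 = n % 2 := by
        have h2 : (n-k) % 2 = 0 := Nat.even_iff.mp hev
        omega
      simp only [hmod, iff_true]
      calc (0:ℝ) < _ := hP
        _ = 1 * (k:ℝ)^2 * ((Nat.factorial (n-1):ℝ))^2 * S *
            (((2*n).choose (n+k) : ℕ):ℝ) / ((Nat.factorial (2*n):ℝ)) := by ring
    · rw [hod.neg_one_pow]
      have hmod : ¬ (k % 2 = n % 2) := by
        have h2 : (n-k) % 2 = 1 := Nat.odd_iff.mp hod
        omega
      simp only [hmod, iff_false, not_lt]
      have hE : (-1:ℝ) * (k:ℝ)^2 * ((Nat.factorial (n-1):ℝ))^2 * S *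
          (((2*n).choose (n+k) : ℕ):ℝ) / ((Nat.factorial (2*n):ℝ))
          = -((k:ℝ)^2 * ((Nat.factorial (n-1):ℝ))^2 * S *
          (((2*n).choose (n+k) : ℕ):ℝ) / ((Nat.factorial (2*n):ℝ))) := by ring
      rw [hE]
      linarith [hP]
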